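/- (Convex hull of a startup-plus-linear cost.) Let G > 0, c ≥ 0, v ∈ ℝ, and define f : ℝ → ℝ by f(0) = 0 and f(z) = c + v·z for z ≠ 0. Then: (i) for all z ∈ [0,G], (v + c/G)·z ≤ f(z); and (ii) for every function h : ℝ → ℝ that is convex on [0,G] and satisfies h(z) ≤ f(z) for all z ∈ [0,G], one has h(z) ≤ (v + c/G)·z for all z ∈ [0,G]. Hence z ↦ (v + c/G)·z is the convex envelope of f on [0,G]. -/

import Mathlib

/-- the convex envelope on `[0, G]` of the startup-plus-linear cost
`f(0) = 0`, `f(z) = c + v·z` for `z ≠ 0` is the linear function `z ↦ (v + c/G)·z`. -/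
theorem convex_envelope_startup_linear (G c v : ℝ) (hG : 0 < G) (hc : 0 ≤ c)
    (f : ℝ → ℝ) (hf0 : f 0 = 0) (hf : ∀ z : ℝ, z ≠ 0 → f z = c + v * z) :
    (∀ z ∈ Set.Icc (0 : ℝ) G, (v + c / G) * z ≤ f z) ∧
    (∀ h : ℝ → ℝ, ConvexOn ℝ (Set.Icc (0 : ℝ) G) h →
      (∀ z ∈ Set.Icc (0 : ℝ) G, h z ≤ f z) →
      ∀ z ∈ Set.Icc (0 : ℝ) G, h z ≤ (v + c / G) * z) := by
  constructor
  · rintro z ⟨hz0, hzG⟩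
    rcases eq_or_ne z 0 with rfl | hz
    · simp [hf0]
    · rw [hf z hz]
      have h1 : c / G * z ≤ c := by
        rw [div_mul_eq_mul_div, div_le_iff₀ hG]
        exact mul_le_mul_of_nonneg_left hzG hc
      nlinarith
  · rintro h hconv hle z ⟨hz0, hzG⟩
    have t0 : 0 ≤ z / G := div_nonneg hz0 hG.le
    have t1 : z / G ≤ 1 := (div_le_one hG).mpr hzG
    have key := hconv.2 (Set.mem_Icc.mpr ⟨le_refl 0, hG.le⟩)
      (Set.mem_Icc.mpr ⟨hG.le, le_refl G⟩)
      (show (0:ℝ) ≤ 1 - z / G by linarith) t0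
      (show (1 - z / G) + z / G = 1 by ring)
    have hcomb : (1 - z / G) • (0 : ℝ) + (z / G) • G = z := by
      field_simp
      rw [smul_zero, zero_add, smul_eq_mul, div_mul_cancel₀ z hG.ne']
    rw [hcomb] at key
    have hh0 : h 0 ≤ 0 := by
      have := hle 0 ⟨le_refl 0, hG.le⟩; rwa [hf0] at this
    have hhG : h G ≤ c + v * G := by
      have := hle G ⟨hG.le, le_refl G⟩; rwa [hf G hG.ne'] at this
    have h2 : (1 - z / G) * h 0 + (z / G) * h G ≤ (z / G) * (c + v * G) := by
      nlinarith
    have h3 : (z / G) * (c + v * G) = (v + c / G) * z := by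
      field_simp; ring
    calc h z ≤ (1 - z / G) * h 0 + (z / G) * h G := key
      _ ≤ (z / G) * (c + v * G) := h2
      _ = (v + c / G) * z := h3
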